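/- Let C be a well-powered category with small coproducts, wide pullbacks, and strong epi–mono factorizations (so each Subobject lattice is a complete lattice), and let F : C ⥤ C preserve monomorphisms and intersections. Given an I-pointed F-coalgebra (C, c : C ⟶ F.obj C, i_C : I ⟶ C), let m₀ be the image subobject of i_C and let R = ⨆_{k ∈ ℕ} ⬗_c^[k] m₀ in Subobject C (the supremum of all iterated applications of the previous-time operator of c to m₀). Then there exist morphisms r : (R : C) ⟶ F.obj (R : C) and i_R : I ⟶ (R : C) such that R.arrow is a homomorphism of I-pointed coalgebras from (R, r, i_R) to (C, c, i_C), and the I-pointed coalgebra (R, r, i_R) is reachable. -/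

import Mathlib

open CategoryTheory CategoryTheory.Limits

universe w v u

variable {C : Type u} [Category.{v} C]

/-- A functor preserves monomorphisms. -/
def PreservesMonos (F : C ⥤ C) : Prop :=
  ∀ ⦃X Y : C⦄ (f : X ⟶ Y), Mono f → Mono (F.map f)

/-- The induced map on subobject lattices of a mono-preserving functor. -/
noncomputable def subMap {F : C ⥤ C} (hF : PreservesMonos F) {Y : C} (m : Subobject Y) :
    Subobject (F.obj Y) :=
  letI : Mono (F.map m.arrow) := hF m.arrow inferInstance
  Subobject.mk (F.map m.arrow)

/-- A mono-preserving functor preserves intersections if the induced maps on subobject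
lattices preserve arbitrary infima. -/
def PreservesIntersections [WellPowered.{v} C] [HasWidePullbacks.{v} C] {F : C ⥤ C}
    (hF : PreservesMonos F) : Prop :=
  ∀ ⦃Y : C⦄ (s : Set (Subobject Y)), subMap hF (sInf s) = sInf (subMap hF '' s)

/-- The "next time" operator of a morphism `f : X ⟶ F.obj Y`. -/
noncomputable def nextTime [HasPullbacks C] {F : C ⥤ C} (hF : PreservesMonos F)
    {X Y : C} (f : X ⟶ F.obj Y) (n : Subobject Y) : Subobject X :=
  (Subobject.pullback f).obj (subMap hF n)

/-- The "previous time" operator of a morphism `f : X ⟶ F.obj Y`: it sends a subobject `m` of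
`X` to the least subobject `n` of `Y` such that `m.arrow ≫ f` factors through `F.map n.arrow`. -/
noncomputable def prevTime [WellPowered.{v} C] [HasWidePullbacks.{v} C] (F : C ⥤ C)
    {X Y : C} (f : X ⟶ F.obj Y) (m : Subobject X) : Subobject Y :=
  sInf {n : Subobject Y | ∃ g : (m : C) ⟶ F.obj (n : C), g ≫ F.map n.arrow = m.arrow ≫ f}

/-- An `I`-pointed coalgebra `(X, c, i)` is reachable if every monomorphic homomorphism of
`I`-pointed coalgebras into it is an isomorphism. -/
def Reachable (F : C ⥤ C) {I X : C} (c : X ⟶ F.obj X) (i : I ⟶ X) : Prop :=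
  ∀ ⦃S : C⦄ (s : S ⟶ F.obj S) (iS : I ⟶ S) (m : S ⟶ X),
    Mono m → s ≫ F.map m = m ≫ c → iS ≫ m = i → IsIso m
section AuxLemmas

variable [WellPowered.{v} C] [HasWidePullbacks.{v} C]

/-- The defining set of `prevTime` is upward closed. -/
lemma aux_mem_up {F : C ⥤ C} {X Y : C} (f : X ⟶ F.obj Y) (m : Subobject X)
    {n n' : Subobject Y} (h : n ≤ n')
    (hn : ∃ g : (m : C) ⟶ F.obj (n : C), g ≫ F.map n.arrow = m.arrow ≫ f) :
    ∃ g : (m : C) ⟶ F.obj (n' : C), g ≫ F.map n'.arrow = m.arrow ≫ f := by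
  obtain ⟨g, hg⟩ := hn
  exact ⟨g ≫ F.map (Subobject.ofLE _ _ h), by
    rw [Category.assoc, ← F.map_comp, Subobject.ofLE_arrow, hg]⟩

lemma prevTime_monotone {F : C ⥤ C} {X Y : C} (f : X ⟶ F.obj Y) {m m' : Subobject X}
    (h : m ≤ m') : prevTime F f m ≤ prevTime F f m' := by
  apply Subobject.le_sInf.{v}
  rintro n ⟨g, hg⟩
  apply Subobject.sInf_le.{v}
  exact ⟨Subobject.ofLE _ _ h ≫ g, by
    rw [Category.assoc, hg, ← Category.assoc, Subobject.ofLE_arrow]⟩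

lemma subMap_factors_iff {F : C ⥤ C} (hF : PreservesMonos F) {Y A : C} (n : Subobject Y)
    (f : A ⟶ F.obj Y) :
    (subMap hF n).Factors f ↔ ∃ g : A ⟶ F.obj (n : C), g ≫ F.map n.arrow = f := by
  letI : Mono (F.map n.arrow) := hF n.arrow inferInstance
  show (Subobject.mk (F.map n.arrow)).Factors f ↔ _
  constructor
  · intro h
    refine ⟨(Subobject.mk (F.map n.arrow)).factorThru f h ≫
      (Subobject.underlyingIso (F.map n.arrow)).hom, ?_⟩
    rw [Category.assoc, Subobject.underlyingIso_hom_comp_eq_mk, Subobject.factorThru_arrow]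
  · rintro ⟨g, rfl⟩
    have := Subobject.factors_comp_arrow
      (P := Subobject.mk (F.map n.arrow)) (g ≫ (Subobject.underlyingIso (F.map n.arrow)).inv)
    simpa [Subobject.underlyingIso_arrow] using this

lemma factors_iff_imageSubobject_le [Limits.HasImages C] {A B : C} (f : A ⟶ B)
    (q : Subobject B) : q.Factors f ↔ imageSubobject f ≤ q := by
  constructor
  · intro h
    exact imageSubobject_le f (q.factorThru f h) (q.factorThru_arrow f h)
  · intro h
    refine Subobject.factors_of_le f h ?_
    have := Subobject.factors_comp_arrow (P := imageSubobject f) (factorThruImageSubobject f)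
    simpa [imageSubobject_arrow_comp] using this

/-- The least-bound property: `prevTime F f m` itself belongs to the defining set. -/
lemma prevTime_mem [Limits.HasImages C] {F : C ⥤ C} (hF : PreservesMonos F)
    (hInt : PreservesIntersections hF) {X Y : C} (f : X ⟶ F.obj Y) (m : Subobject X) :
    ∃ g : (m : C) ⟶ F.obj ((prevTime F f m : Subobject Y) : C),
      g ≫ F.map (prevTime F f m).arrow = m.arrow ≫ f := by
  rw [← subMap_factors_iff hF]
  show (subMap hF (sInf _)).Factors _
  rw [hInt, factors_iff_imageSubobject_le]
  apply Subobject.le_sInf.{v}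
  rintro q ⟨n, hn, rfl⟩
  rw [← factors_iff_imageSubobject_le, subMap_factors_iff hF]
  exact hn

/-- If every member of a set of subobjects "factors through `p` after `φ`", then so does
the supremum of the set. -/
lemma factors_sSup [HasCoproducts.{v} C] [HasStrongEpiMonoFactorisations C]
    {X Z P : C} (s : Set (Subobject X)) (φ : X ⟶ Z) (p : P ⟶ Z) [Mono p]
    (h : ∀ n ∈ s, ∃ g : (n : C) ⟶ P, g ≫ p = n.arrow ≫ φ) :
    ∃ g : ((sSup s : Subobject X) : C) ⟶ P, g ≫ p = (sSup s : Subobject X).arrow ≫ φ := by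
  have e : sSup s =
      Subobject.mk (image.ι (Subobject.smallCoproductDesc.{v} s)) := rfl
  rw [e]
  choose g hg using h
  let D := Subobject.smallCoproductDesc.{v} s
  let hdesc : (∐ fun j : equivShrink.{v} (Subobject X) '' s =>
      (((equivShrink.{v} (Subobject X)).symm j : Subobject X) : C)) ⟶ P :=
    Sigma.desc fun j => g _ ((Subobject.symm_apply_mem_iff_mem_image _ _ _).mpr j.2)
  have sq : CommSq hdesc (factorThruImage D) p (image.ι D ≫ φ) := by
    constructor
    rw [← Category.assoc, image.fac]
    apply Sigma.hom_ext
    intro j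
    simp only [hdesc, D, Subobject.smallCoproductDesc, colimit.ι_desc_assoc, Cofan.mk_ι_app,
      colimit.ι_desc]
    rw [hg]
  exact ⟨(Subobject.underlyingIso _).hom ≫ sq.lift, by
    rw [Category.assoc, sq.fac_right, ← Category.assoc,
      Subobject.underlyingIso_hom_comp_eq_mk]⟩

end AuxLemmas

/-- **Iterative construction of the reachable part.**
Let `C` be a well-powered category with small coproducts, wide pullbacks and strong
epi–mono factorizations, and let `F` preserve monomorphisms and intersections.  Given an
`I`-pointed `F`-coalgebra `(X, c, i_C)`, let `m₀` be the image subobject of `i_C` and let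
`R = ⨆ k, (prevTime F c)^[k] m₀`.  Then `R` carries an `I`-pointed coalgebra structure
`(r, i_R)` such that `R.arrow` is a homomorphism of `I`-pointed coalgebras into
`(X, c, i_C)` and `(R, r, i_R)` is reachable. -/
theorem reachable_part_iterative_construction
    [WellPowered.{v} C] [HasWidePullbacks.{v} C] [HasCoproducts.{v} C]
    [HasStrongEpiMonoFactorisations C]
    (F : C ⥤ C) (hF : PreservesMonos F) (hInt : PreservesIntersections hF)
    {I X : C} (c : X ⟶ F.obj X) (i_C : I ⟶ X)
    (R : Subobject X) (hR : R = ⨆ k : ℕ, (prevTime F c)^[k] (imageSubobject i_C)) :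
    ∃ (r : (R : C) ⟶ F.obj (R : C)) (i_R : I ⟶ (R : C)),
      r ≫ F.map R.arrow = R.arrow ≫ c ∧ i_R ≫ R.arrow = i_C ∧ Reachable F r i_R := by
  subst hR
  rw [← sSup_range]
  set mseq : ℕ → Subobject X := fun k => (prevTime F c)^[k] (imageSubobject i_C) with hmseq
  set N : Subobject X := sSup (Set.range mseq) with hN
  -- each iterate is ≤ N
  have hle : ∀ k, mseq k ≤ N := fun k => Subobject.le_sSup.{v} _ _ ⟨k, rfl⟩
  -- each member of the chain factors through `F.map N.arrow` after `c`
  have key : ∀ n ∈ Set.range mseq,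
      ∃ g : (n : C) ⟶ F.obj (N : C), g ≫ F.map N.arrow = n.arrow ≫ c := by
    rintro n ⟨k, rfl⟩
    have hmem := prevTime_mem hF hInt c (mseq k)
    have hit : prevTime F c (mseq k) = mseq (k + 1) := by
      rw [hmseq]; exact (Function.iterate_succ_apply' _ _ _).symm
    rw [hit] at hmem
    exact aux_mem_up c (mseq k) (hle (k + 1)) hmem
  -- construct the coalgebra structure `r` on `N`
  haveI : Mono (F.map N.arrow) := hF N.arrow inferInstance
  obtain ⟨r, hr⟩ := factors_sSup (Set.range mseq) c (F.map N.arrow) key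
  replace hr : r ≫ F.map N.arrow = N.arrow ≫ c := hr
  -- construct the point `i_R`
  have h0 : imageSubobject i_C ≤ N := hle 0
  refine ⟨r, factorThruImageSubobject i_C ≫ Subobject.ofLE _ _ h0, hr, ?_, ?_⟩
  · rw [Category.assoc, Subobject.ofLE_arrow, imageSubobject_arrow_comp]
  -- reachability
  intro S s iS m hm hcomm hpoint
  haveI : Mono m := hm
  haveI : Mono (m ≫ N.arrow) := mono_comp _ _
  set M : Subobject X := Subobject.mk (m ≫ N.arrow) with hM
  -- `M` is a pointed subcoalgebra of `(X, c, i_C)`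
  have hMarrow : M.arrow = (Subobject.underlyingIso (m ≫ N.arrow)).hom ≫ (m ≫ N.arrow) :=
    (Subobject.underlyingIso_hom_comp_eq_mk (m ≫ N.arrow)).symm
  have hMc : ∃ g : (M : C) ⟶ F.obj (M : C), g ≫ F.map M.arrow = M.arrow ≫ c := by
    refine ⟨(Subobject.underlyingIso (m ≫ N.arrow)).hom ≫ s ≫
      F.map ((Subobject.underlyingIso (m ≫ N.arrow)).inv), ?_⟩
    rw [Category.assoc, Category.assoc, ← F.map_comp, Subobject.underlyingIso_arrow,
      F.map_comp, hMarrow]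
    simp only [Category.assoc]
    rw [reassoc_of% hcomm, hr]
  -- `prevTime` applied to `M` stays below `M`
  have hMstep : prevTime F c M ≤ M := Subobject.sInf_le.{v} _ _ hMc
  -- every iterate is below `M`
  have hiter : ∀ k, mseq k ≤ M := by
    intro k
    induction k with
    | zero =>
      refine imageSubobject_le i_C (iS ≫ (Subobject.underlyingIso (m ≫ N.arrow)).inv) ?_
      rw [Category.assoc, Subobject.underlyingIso_arrow, ← Category.assoc, hpoint,
        Category.assoc, Subobject.ofLE_arrow, imageSubobject_arrow_comp]
    | succ k ih =>
      have hit : mseq (k + 1) = prevTime F c (mseq k) := by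
        rw [hmseq]; exact Function.iterate_succ_apply' _ _ _
      rw [hit]
      exact le_trans (prevTime_monotone c ih) hMstep
  have hNM : N ≤ M := Subobject.sSup_le.{v} _ _ (by rintro n ⟨k, rfl⟩; exact hiter k)
  -- produce the inverse of `m`
  let u : (N : C) ⟶ S := Subobject.ofLEMk N (m ≫ N.arrow) hNM
  have hu : u ≫ m ≫ N.arrow = N.arrow := Subobject.ofLEMk_comp hNM
  have hum : u ≫ m = 𝟙 _ := by
    rw [← cancel_mono N.arrow, Category.assoc, hu, Category.id_comp]
  have hmu : m ≫ u = 𝟙 _ := by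
    rw [← cancel_mono (m ≫ N.arrow), Category.id_comp, Category.assoc, hu]
  exact ⟨u, hmu, hum⟩
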